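/- Let M₈ be the 8×8 matrix with diagonal (−4,−2,−2,−2,−2,−2,−2,−3), (M₈)_{1j} = (M₈)_{j1} = 1 for j = 2,…,8, zeros elsewhere. The image of the vector K = (2,0,0,0,0,0,0,1) in the quotient group Z^8 / M₈(Z^8) is an element of order exactly 4. -/
import Mathlib

open Matrix

def w8 : Fin 8 → ℤ := ![-4, -2, -2, -2, -2, -2, -2, -3]

def M8 : Matrix (Fin 8) (Fin 8) ℤ :=
  Matrix.of fun i j => if i = j then w8 i else if i = 0 ∨ j = 0 then 1 else 0

/-- The sublattice M₈(ℤ⁸) ⊆ ℤ⁸, as an additive subgroup. -/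
def imM8 : AddSubgroup (Fin 8 → ℤ) :=
  (LinearMap.range M8.mulVecLin).toAddSubgroup

/-- Auxiliary functional vanishing on the image of M₈. -/
def phi8 : (Fin 8 → ℤ) →+ ZMod 8 where
  toFun x := ((2 * x 0 + x 1 + x 2 + x 3 + x 4 + x 5 + 5 * x 6 + 6 * x 7 : ℤ) : ZMod 8)
  map_zero' := by simp
  map_add' := by intro x y; push_cast; simp [Pi.add_apply]; ring

lemma phi8_vanish (y : Fin 8 → ℤ) (hy : y ∈ imM8) : phi8 y = 0 := by
  obtain ⟨x, rfl⟩ := hy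
  show ((_ : ℤ) : ZMod 8) = 0
  rw [ZMod.intCast_zmod_eq_zero_iff_dvd]
  have h0 : w8 0 = -4 := rfl
  have h1' : w8 1 = -2 := rfl
  have h2' : w8 2 = -2 := rfl
  have h3' : w8 3 = -2 := rfl
  have h4' : w8 4 = -2 := rfl
  have h5 : w8 5 = -2 := rfl
  have h6 : w8 6 = -2 := rfl
  have h7 : w8 7 = -3 := rfl
  simp (config := { decide := true }) only [Matrix.mulVecLin_apply, Matrix.mulVec,
    dotProduct, Fin.sum_univ_eight, M8, h0, h1', h2', h3', h4', h5, h6, h7,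
    Matrix.of_apply, Matrix.cons_val_zero,
    Matrix.cons_val_one, Matrix.head_cons, Matrix.cons_val_two, Matrix.cons_val_three,
    Matrix.cons_val_four, Matrix.tail_cons, if_true, if_false]
  refine ⟨x 0 - x 6 - 2 * x 7, ?_⟩
  ring

lemma four_smul_mem : ((4:ℕ) • ![2, 0, 0, 0, 0, 0, 0, (1:ℤ)]) ∈ imM8 :=
  ⟨![-14, -7, -7, -7, -7, -7, -7, -6], by decide⟩

/-- The image of K = (2,0,0,0,0,0,0,1) in ℤ⁸ / M₈(ℤ⁸) has order exactly 4. -/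
theorem stmt_9 :
    addOrderOf ((QuotientAddGroup.mk ![2, 0, 0, 0, 0, 0, 0, 1] :
      (Fin 8 → ℤ) ⧸ imM8)) = 4 := by
  have : Fact (Nat.Prime 2) := ⟨Nat.prime_two⟩
  have h4 : (2 ^ (1 + 1) : ℕ) • (QuotientAddGroup.mk ![2, 0, 0, 0, 0, 0, 0, 1] :
      (Fin 8 → ℤ) ⧸ imM8) = 0 := by
    rw [← QuotientAddGroup.mk_nsmul, QuotientAddGroup.eq_zero_iff]
    exact four_smul_mem
  have h2 : ¬ (2 ^ 1 : ℕ) • (QuotientAddGroup.mk ![2, 0, 0, 0, 0, 0, 0, 1] :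
      (Fin 8 → ℤ) ⧸ imM8) = 0 := by
    rw [← QuotientAddGroup.mk_nsmul, QuotientAddGroup.eq_zero_iff]
    intro h
    have hv := phi8_vanish _ h
    rw [show ((2 ^ 1:ℕ) • ![2, 0, 0, 0, 0, 0, 0, (1:ℤ)]) = ![4,0,0,0,0,0,0,2] from by decide]
      at hv
    have : phi8 ![4,0,0,0,0,0,0,(2:ℤ)] = ((20 : ℤ) : ZMod 8) := by decide
    rw [this] at hv
    exact (by decide : ((20 : ℤ) : ZMod 8) ≠ 0) hv
  have := addOrderOf_eq_prime_pow (p := 2) (n := 1) h2 h4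
  simpa using this
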